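/- Let M be an n×n real matrix for which there exist C ≥ 0 and α ∈ [0,1) such that the operator norm of M^k is at most C·α^k for all k. Let z, h : ℕ → ℝⁿ be bounded sequences satisfying z_l = M·z_{l+1} + h_l for all l. Then the series ∑_{l=0}^∞ M^l·h_l converges (the family (M^l·h_l) is summable) and z_0 = ∑_{l=0}^∞ M^l·h_l. -/

import Mathlib

set_option maxHeartbeats 1000000


/-- Infinite-horizon variation-of-constants formula: if the powers of `M` decay
geometrically (operator bound `‖M^k v‖ ≤ C * α^k * ‖v‖` with `C ≥ 0`, `0 ≤ α < 1`)
and `z, h` are bounded sequences satisfying `z_l = M z_{l+1} + h_l`, then the series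
`∑ M^l h_l` converges and `z 0 = ∑' l, M^l h_l`. -/
theorem backward_variation_of_constants_infinite {n : ℕ} (M : Matrix (Fin n) (Fin n) ℝ)
    (C α : ℝ) (hC : 0 ≤ C) (hα0 : 0 ≤ α) (hα1 : α < 1)
    (hM : ∀ (k : ℕ) (v : Fin n → ℝ), ‖(M ^ k).mulVec v‖ ≤ C * α ^ k * ‖v‖)
    (z h : ℕ → Fin n → ℝ)
    (hzb : ∃ Bz, ∀ l, ‖z l‖ ≤ Bz) (hhb : ∃ Bh, ∀ l, ‖h l‖ ≤ Bh)
    (hrec : ∀ l, z l = M.mulVec (z (l + 1)) + h l) :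
    Summable (fun l : ℕ => (M ^ l).mulVec (h l)) ∧
      z 0 = ∑' l : ℕ, (M ^ l).mulVec (h l) := by
  obtain ⟨Bz, hBz⟩ := hzb
  obtain ⟨Bh, hBh⟩ := hhb
  have hBh0 : 0 ≤ Bh := le_trans (norm_nonneg _) (hBh 0)
  -- summability
  have hsum : Summable (fun l : ℕ => (M ^ l).mulVec (h l)) := by
    apply Summable.of_norm_bounded (g := fun l => (C * Bh) * α ^ l)
      ((summable_geometric_of_lt_one hα0 hα1).mul_left _)
    intro l
    calc ‖(M ^ l).mulVec (h l)‖ ≤ C * α ^ l * ‖h l‖ := hM l _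
      _ ≤ C * α ^ l * Bh := by
          apply mul_le_mul_of_nonneg_left (hBh l)
          positivity
      _ = (C * Bh) * α ^ l := by ring
  refine ⟨hsum, ?_⟩
  -- partial sum identity
  have key : ∀ N : ℕ, z 0 = (∑ l ∈ Finset.range N, (M ^ l).mulVec (h l))
      + (M ^ N).mulVec (z N) := by
    intro N
    induction N with
    | zero => simp [Matrix.one_mulVec]
    | succ N ih =>
      rw [ih, Finset.sum_range_succ, hrec N]
      rw [Matrix.mulVec_add, pow_succ, ← Matrix.mulVec_mulVec]
      abel
  -- limits
  have h1 : Filter.Tendsto (fun N : ℕ => ∑ l ∈ Finset.range N, (M ^ l).mulVec (h l))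
      Filter.atTop (nhds (∑' l : ℕ, (M ^ l).mulVec (h l))) :=
    hsum.hasSum.tendsto_sum_nat
  have h2 : Filter.Tendsto (fun N : ℕ => (M ^ N).mulVec (z N)) Filter.atTop (nhds 0) := by
    rw [tendsto_zero_iff_norm_tendsto_zero]
    have hub : ∀ N, ‖(M ^ N).mulVec (z N)‖ ≤ (C * Bz) * α ^ N := by
      intro N
      have hBz0 : 0 ≤ Bz := le_trans (norm_nonneg _) (hBz 0)
      calc ‖(M ^ N).mulVec (z N)‖ ≤ C * α ^ N * ‖z N‖ := hM N _
        _ ≤ C * α ^ N * Bz := by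
            apply mul_le_mul_of_nonneg_left (hBz N)
            positivity
        _ = (C * Bz) * α ^ N := by ring
    have hgeo : Filter.Tendsto (fun N : ℕ => (C * Bz) * α ^ N) Filter.atTop (nhds 0) := by
      simpa using (tendsto_pow_atTop_nhds_zero_of_lt_one hα0 hα1).const_mul (C * Bz)
    exact squeeze_zero (fun N => norm_nonneg _) hub hgeo
  have h3 : Filter.Tendsto (fun N : ℕ => (∑ l ∈ Finset.range N, (M ^ l).mulVec (h l))
      + (M ^ N).mulVec (z N)) Filter.atTop
      (nhds (∑' l : ℕ, (M ^ l).mulVec (h l))) := by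
    simpa using h1.add h2
  have h4 : Filter.Tendsto (fun _ : ℕ => z 0) Filter.atTop
      (nhds (∑' l : ℕ, (M ^ l).mulVec (h l))) := by
    convert h3 using 1
    funext N
    exact key N
  exact tendsto_nhds_unique tendsto_const_nhds h4
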